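/- Let n ≥ 2, let ε̃ ∈ (0, 1], let s* = (1/2)·√(2n·log(2n/ε̃)), and let w be a positive integer with w ≤ ε̃·√n / (16·√(2·log(2n/ε̃))), w ≤ s*, and s* + w < n/2. Then for every integer ℓ with n/2 ≤ ℓ ≤ n/2 + s* and every integer i with 1 ≤ i ≤ w, the product ∏_{j=0}^{i−1} (n−ℓ−j)/(ℓ+i−j) satisfies 1 − ε̃/2 ≤ ∏_{j=0}^{i−1} (n−ℓ−j)/(ℓ+i−j) ≤ 1. -/

import Mathlib

set_option maxHeartbeats 1000000


/-- For `n ≥ 2`, `ε̃ ∈ (0,1]`, `s* = (1/2)√(2n·log(2n/ε̃))` and a positive integer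
`w ≤ ε̃√n/(16√(2log(2n/ε̃)))` with `w ≤ s*` and `s* + w < n/2`: for every integer `ℓ`
with `n/2 ≤ ℓ ≤ n/2 + s*` and every integer `i` with `1 ≤ i ≤ w`,
`1 − ε̃/2 ≤ Π_{j=0}^{i−1} (n−ℓ−j)/(ℓ+i−j) ≤ 1`. -/
theorem product_bounds_above_middle (n : ℕ) (hn : 2 ≤ n)
    (εt : ℝ) (hεt0 : 0 < εt) (hεt1 : εt ≤ 1)
    (s : ℝ) (hs : s = (1 / 2) * Real.sqrt (2 * n * Real.log (2 * n / εt)))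
    (w : ℕ) (hw0 : 1 ≤ w)
    (hw1 : (w : ℝ) ≤ εt * Real.sqrt n / (16 * Real.sqrt (2 * Real.log (2 * n / εt))))
    (hw2 : (w : ℝ) ≤ s) (hws : s + w < n / 2) :
    ∀ ℓ : ℕ, (n : ℝ) / 2 ≤ ℓ → (ℓ : ℝ) ≤ n / 2 + s →
      ∀ i : ℕ, 1 ≤ i → i ≤ w →
        1 - εt / 2 ≤ ∏ j ∈ Finset.range i, ((n : ℝ) - ℓ - j) / ((ℓ : ℝ) + i - j) ∧
        ∏ j ∈ Finset.range i, ((n : ℝ) - ℓ - j) / ((ℓ : ℝ) + i - j) ≤ 1 := by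
  intro ℓ hℓ1 hℓ2 i hi1 hiw
  have hn2 : (2:ℝ) ≤ n := by exact_mod_cast hn
  have hn0 : (0:ℝ) < n := by linarith
  set L : ℝ := Real.log (2 * n / εt) with hLdef
  have hL : 0 < L := Real.log_pos (by rw [lt_div_iff₀ hεt0]; nlinarith)
  have hs0 : 0 ≤ s := by rw [hs]; positivity
  have hA : 0 < Real.sqrt (2 * L) := Real.sqrt_pos.mpr (by linarith)
  have hsval : s = 1 / 2 * (Real.sqrt n * Real.sqrt (2 * L)) := by
    rw [hs, show (2:ℝ) * n * L = n * (2 * L) by ring, Real.sqrt_mul hn0.le]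
  have hw0' : (1:ℝ) ≤ w := by exact_mod_cast hw0
  have hBB : Real.sqrt n * Real.sqrt n = n := Real.mul_self_sqrt hn0.le
  -- key bound : w * s ≤ εt * n / 32
  have haux : ∀ A B : ℝ, 0 < A → B * B = (n:ℝ) →
      εt * B / (16 * A) * (1 / 2 * (B * A)) = εt * n / 32 := by
    intro A B hA' hB'
    field_simp
    linear_combination 32 * hB'
  have hws32 : (w:ℝ) * s ≤ εt * n / 32 := by
    have h1 : (w:ℝ) * s ≤ (εt * Real.sqrt n / (16 * Real.sqrt (2 * L))) * s :=
      mul_le_mul_of_nonneg_right hw1 hs0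
    have h2 : (εt * Real.sqrt n / (16 * Real.sqrt (2 * L))) * s = εt * n / 32 := by
      rw [hsval]; exact haux _ _ hA hBB
    linarith [h2 ▸ h1]
  set D : ℝ := 2 * (2 * s + w) / n with hDdef
  have hD0 : 0 ≤ D := by positivity
  have hiw' : (i:ℝ) ≤ w := by exact_mod_cast hiw
  have hi1' : (1:ℝ) ≤ i := by exact_mod_cast hi1
  have key : (w:ℝ) * (2 * (2 * s + w)) ≤ εt / 2 * n := by
    nlinarith [mul_nonneg (by positivity : (0:ℝ) ≤ (w:ℝ)) (by linarith : (0:ℝ) ≤ s - w)]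
  have hwD : (w:ℝ) * D ≤ εt / 2 := by
    have h : (w:ℝ) * D = ((w:ℝ) * (2 * (2 * s + w))) / n := by rw [hDdef]; ring
    rw [h, div_le_iff₀ hn0]
    exact key
  have hD1 : D ≤ 1 / 2 := by nlinarith
  have hc0 : 0 ≤ 1 - D := by linarith
  -- per-factor bounds
  have hfac : ∀ j ∈ Finset.range i,
      (0 < (ℓ:ℝ) + i - j) ∧ (0 ≤ ((n:ℝ) - ℓ - j)) ∧
      (1 - D ≤ ((n : ℝ) - ℓ - j) / ((ℓ : ℝ) + i - j)) ∧
      (((n : ℝ) - ℓ - j) / ((ℓ : ℝ) + i - j) ≤ 1) := by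
    intro j hj
    have hj' : j < i := Finset.mem_range.mp hj
    have hj1 : (j:ℝ) + 1 ≤ i := by exact_mod_cast Nat.succ_le_of_lt hj'
    have hden : (n:ℝ) / 2 ≤ (ℓ:ℝ) + i - j := by linarith
    have hdenpos : 0 < (ℓ:ℝ) + i - j := by linarith
    have hnum : 0 < (n:ℝ) - ℓ - j := by linarith
    refine ⟨hdenpos, hnum.le, ?_, ?_⟩
    · rw [le_div_iff₀ hdenpos]
      have hDden : D * ((n:ℝ) / 2) ≤ D * ((ℓ:ℝ) + i - j) :=
        mul_le_mul_of_nonneg_left hden hD0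
      have hDn : D * ((n:ℝ) / 2) = 2 * s + w := by
        rw [hDdef]; field_simp
      linarith [hDden, hDn, hℓ2, hiw']
    · rw [div_le_one hdenpos]
      linarith
  constructor
  · have hpow : (1 - D) ^ i ≤ ∏ j ∈ Finset.range i, ((n : ℝ) - ℓ - j) / ((ℓ : ℝ) + i - j) := by
      have h := Finset.prod_le_prod (s := Finset.range i)
        (f := fun _ : ℕ => 1 - D) (g := fun j : ℕ => ((n : ℝ) - ℓ - j) / ((ℓ : ℝ) + i - j))
        (fun j _ => hc0) (fun j hj => (hfac j hj).2.2.1)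
      simpa using h
    have hbern : (1:ℝ) - (i:ℝ) * D ≤ (1 - D) ^ i := by
      have hb := one_add_mul_le_pow (a := -D) (by linarith) i
      calc (1:ℝ) - (i:ℝ) * D = 1 + (i:ℝ) * (-D) := by ring
        _ ≤ (1 + -D) ^ i := hb
        _ = (1 - D) ^ i := by ring_nf
    have hiD : (i:ℝ) * D ≤ (w:ℝ) * D := mul_le_mul_of_nonneg_right hiw' hD0
    linarith
  · exact Finset.prod_le_one
      (fun j hj => div_nonneg (hfac j hj).2.1 (hfac j hj).1.le)
      (fun j hj => (hfac j hj).2.2.2)
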